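/- Let A and B be real m×n matrices satisfying Aᵀ B = 0 and A Bᵀ = 0. Then ‖A + B‖_* = ‖A‖_* + ‖B‖_*. -/

import Mathlib

open Matrix

namespace Matrix.PosSemidef

/-- The psd square root, defined as in the frozen `nuclearNorm`. -/
noncomputable def sqrt {n : Type*} [Fintype n] [DecidableEq n] {A : Matrix n n ℝ}
    (hA : A.PosSemidef) : Matrix n n ℝ :=
  (hA.1.eigenvectorUnitary : Matrix n n ℝ) *
    diagonal ((RCLike.ofReal : ℝ → ℝ) ∘ Real.sqrt ∘ hA.1.eigenvalues) *
    (star (hA.1.eigenvectorUnitary : Matrix n n ℝ))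

section
open scoped MatrixOrder

lemma sqrt_eq_cfcSqrt {n : Type*} [Fintype n] [DecidableEq n] {A : Matrix n n ℝ}
    (hA : A.PosSemidef) : hA.sqrt = CFC.sqrt A := by
  rw [CFC.sqrt_eq_real_sqrt A hA.nonneg, cfcₙ_eq_cfc, IsHermitian.cfc_eq hA.1,
    IsHermitian.cfc, Unitary.conjStarAlgAut_apply, sqrt]

lemma posSemidef_sqrt {n : Type*} [Fintype n] [DecidableEq n] {A : Matrix n n ℝ}
    (hA : A.PosSemidef) : hA.sqrt.PosSemidef := by
  rw [sqrt_eq_cfcSqrt]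
  exact nonneg_iff_posSemidef.mp (CFC.sqrt_nonneg A)

lemma sqrt_mul_self {n : Type*} [Fintype n] [DecidableEq n] {A : Matrix n n ℝ}
    (hA : A.PosSemidef) : hA.sqrt * hA.sqrt = A := by
  rw [sqrt_eq_cfcSqrt]
  exact CFC.sqrt_mul_sqrt_self A hA.nonneg

lemma eq_sqrt_of_sq_eq {n : Type*} [Fintype n] [DecidableEq n] {A B : Matrix n n ℝ}
    (hA : A.PosSemidef) (hB : B.PosSemidef) (h : A ^ 2 = B) : A = hB.sqrt := by
  rw [sqrt_eq_cfcSqrt]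
  exact (CFC.sqrt_unique (by rw [← pow_two]; exact h) hA.nonneg).symm

end

end Matrix.PosSemidef

/-- If `P Q = 0` for psd matrices, then their square roots also multiply to zero. -/
lemma sqrt_mul_sqrt_eq_zero {n : ℕ} {P Q : Matrix (Fin n) (Fin n) ℝ}
    (hP : P.PosSemidef) (hQ : Q.PosSemidef) (h : P * Q = 0) :
    hP.sqrt * hQ.sqrt = 0 := by
  have hPH : Pᴴ = P := hP.1
  have hsP : hP.sqrt.PosSemidef := hP.posSemidef_sqrt
  have hsQ : hQ.sqrt.PosSemidef := hQ.posSemidef_sqrt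
  -- Step 1 : P * sqrt Q = 0
  have h1 : P * hQ.sqrt = 0 := by
    have key : (P * hQ.sqrt)ᴴᴴ * (P * hQ.sqrt)ᴴ = 0 := by
      rw [conjTranspose_conjTranspose, conjTranspose_mul, hsQ.1, hPH]
      rw [mul_assoc, ← mul_assoc hQ.sqrt, hQ.sqrt_mul_self, ← mul_assoc, h, zero_mul]
    have := Matrix.conjTranspose_mul_self_eq_zero.mp key
    simpa using congrArg conjTranspose this
  -- Step 2
  have key : (hP.sqrt * hQ.sqrt)ᴴ * (hP.sqrt * hQ.sqrt) = 0 := by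
    rw [conjTranspose_mul, hsP.1, hsQ.1]
    calc hQ.sqrt * hP.sqrt * (hP.sqrt * hQ.sqrt)
        = hQ.sqrt * (hP.sqrt * hP.sqrt) * hQ.sqrt := by noncomm_ring
      _ = hQ.sqrt * (P * hQ.sqrt) := by rw [hP.sqrt_mul_self, mul_assoc]
      _ = 0 := by rw [h1, mul_zero]
  exact Matrix.conjTranspose_mul_self_eq_zero.mp key

/-- Nuclear norm: trace of the psd square root of `Aᵀ * A`. -/
noncomputable def nuclearNorm {m n : Type*} [Fintype m] [Fintype n] [DecidableEq n]
    (A : Matrix m n ℝ) : ℝ :=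
  (((Matrix.posSemidef_conjTranspose_mul_self A).1.eigenvectorUnitary : Matrix n n ℝ) *
    diagonal ((RCLike.ofReal : ℝ → ℝ) ∘ Real.sqrt ∘
      (Matrix.posSemidef_conjTranspose_mul_self A).1.eigenvalues) *
    (star ((Matrix.posSemidef_conjTranspose_mul_self A).1.eigenvectorUnitary : Matrix n n ℝ))).trace

/-- **Additivity of the nuclear norm for matrices with orthogonal row and column
spaces**: if `Aᵀ B = 0` and `A Bᵀ = 0` then `‖A + B‖_* = ‖A‖_* + ‖B‖_*`. -/
theorem nuclearNorm_add_of_orthogonal (m n : ℕ)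
    (A B : Matrix (Fin m) (Fin n) ℝ)
    (h₁ : Aᵀ * B = 0) (h₂ : A * Bᵀ = 0) :
    nuclearNorm (A + B) = nuclearNorm A + nuclearNorm B := by
  have hA := Matrix.posSemidef_conjTranspose_mul_self A
  have hB := Matrix.posSemidef_conjTranspose_mul_self B
  have hC := Matrix.posSemidef_conjTranspose_mul_self (A + B)
  have hconjA : Aᴴ = Aᵀ := by ext i j; simp [conjTranspose]
  have hconjB : Bᴴ = Bᵀ := by ext i j; simp [conjTranspose]
  have h₁' : Bᵀ * A = 0 := by
    have := congrArg transpose h₁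
    simpa [transpose_mul] using this
  have hPQ : (Aᴴ * A) * (Bᴴ * B) = 0 := by
    rw [hconjA, hconjB]
    rw [Matrix.mul_assoc, ← Matrix.mul_assoc A, h₂, Matrix.zero_mul, Matrix.mul_zero]
  have hzero : hA.sqrt * hB.sqrt = 0 := sqrt_mul_sqrt_eq_zero hA hB hPQ
  have hzero' : hB.sqrt * hA.sqrt = 0 := by
    calc hB.sqrt * hA.sqrt = (hA.sqrt * hB.sqrt)ᴴ := by
          rw [conjTranspose_mul, hA.posSemidef_sqrt.1, hB.posSemidef_sqrt.1]
      _ = 0 := by rw [hzero]; simp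
  have hsum : (A + B)ᴴ * (A + B) = Aᴴ * A + Bᴴ * B := by
    rw [conjTranspose_add, Matrix.add_mul, Matrix.mul_add, Matrix.mul_add,
      hconjA, hconjB, h₁, h₁']
    abel
  have hS : (hA.sqrt + hB.sqrt).PosSemidef :=
    hA.posSemidef_sqrt.add hB.posSemidef_sqrt
  have hsq : (hA.sqrt + hB.sqrt) ^ 2 = (A + B)ᴴ * (A + B) := by
    rw [hsum, pow_two, add_mul, mul_add, mul_add, hA.sqrt_mul_self, hB.sqrt_mul_self,
      hzero, hzero']
    abel
  have heq : hA.sqrt + hB.sqrt = hC.sqrt := hS.eq_sqrt_of_sq_eq hC hsq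
  show hC.sqrt.trace = hA.sqrt.trace + hB.sqrt.trace
  rw [← heq, trace_add]
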